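/- arXiv:2505.13038 — 2 statements merged into one kernel-verified Lean document; each statement's English description precedes it below -/
import Mathlib

section
/- For the cutoff kernel k^N defined by k^N(x) = C_d x/|x|^d for |x| ≥ N^{-δ} and k^N(x) = C_d x N^{dδ} for |x| < N^{-δ}, and for any ξ ∈ ℝ^d with |ξ| < 2N^{-δ}, the difference satisfies |k^N(x) - k^N(x+ξ)| ≤ ℓ^N(x)|ξ|, where ℓ^N(x) = C(d)/|x|^d if |x| ≥ N^{-δ} and ℓ^N(x) = C(d)N^{dδ} if |x| < N^{-δ}, for some constant C(d) depending only on d. -/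
open MeasureTheory Real Set

noncomputable section

/-- The Coulomb kernel `k(x) = C_d x / |x|^d`. -/
def coulomb (d : ℕ) (Cd : ℝ) (x : EuclideanSpace ℝ (Fin d)) : EuclideanSpace ℝ (Fin d) :=
  (Cd / ‖x‖ ^ d) • x

/-- The cutoff kernel `k^N`. -/
def cutoffKernel (d N : ℕ) (δ Cd : ℝ) (x : EuclideanSpace ℝ (Fin d)) :
    EuclideanSpace ℝ (Fin d) :=
  if (N : ℝ) ^ (-δ) ≤ ‖x‖ then coulomb d Cd x else (Cd * (N : ℝ) ^ ((d : ℝ) * δ)) • x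

/-- The function `ℓ^N` with constant `C`. -/
def ellN (d N : ℕ) (δ C : ℝ) (x : EuclideanSpace ℝ (Fin d)) : ℝ :=
  if (N : ℝ) ^ (-δ) ≤ ‖x‖ then C / ‖x‖ ^ d else C * (N : ℝ) ^ ((d : ℝ) * δ)

lemma pow_sub_pow_abs_le (s t : ℝ) (hs : 0 ≤ s) (ht : 0 ≤ t) (n : ℕ) :
    |s ^ n - t ^ n| ≤ n * max s t ^ (n - 1) * |s - t| := by
  set M := max s t with hM
  have hM0 : 0 ≤ M := le_trans hs (le_max_left _ _)
  rw [← geom_sum₂_mul s t n, abs_mul]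
  have hsum : |∑ i ∈ Finset.range n, s ^ i * t ^ (n - 1 - i)| ≤ n * M ^ (n - 1) := by
    calc |∑ i ∈ Finset.range n, s ^ i * t ^ (n - 1 - i)|
        ≤ ∑ i ∈ Finset.range n, |s ^ i * t ^ (n - 1 - i)| :=
          Finset.abs_sum_le_sum_abs _ _
      _ ≤ ∑ _i ∈ Finset.range n, M ^ (n - 1) := by
          apply Finset.sum_le_sum
          intro i hi
          rw [abs_mul, abs_pow, abs_pow, abs_of_nonneg hs, abs_of_nonneg ht]
          have h1 : s ^ i * t ^ (n - 1 - i) ≤ M ^ i * M ^ (n - 1 - i) := by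
            gcongr
            · exact le_max_left _ _
            · exact le_max_right _ _
          refine h1.trans_eq ?_
          rw [← pow_add]
          congr 1
          have := Finset.mem_range.mp hi
          omega
      _ = n * M ^ (n - 1) := by
          rw [Finset.sum_const, Finset.card_range, nsmul_eq_mul]
  exact mul_le_mul_of_nonneg_right hsum (abs_nonneg _)

lemma coulomb_lip (d : ℕ) (hd : 1 ≤ d) (Cd m : ℝ) (hCd : 0 < Cd) (hm : 0 < m)
    (a b : EuclideanSpace ℝ (Fin d)) (ha : m ≤ ‖a‖) (hb : m ≤ ‖b‖) :
    ‖coulomb d Cd a - coulomb d Cd b‖ ≤ Cd * (d + 1) / m ^ d * ‖a - b‖ := by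
  set s := ‖a‖ with hsdef
  set t := ‖b‖ with htdef
  have hs : 0 < s := lt_of_lt_of_le hm ha
  have ht : 0 < t := lt_of_lt_of_le hm hb
  set M := max s t with hMdef
  have hM0 : 0 < M := lt_of_lt_of_le hs (le_max_left _ _)
  have key : coulomb d Cd a - coulomb d Cd b
      = (Cd / s ^ d) • (a - b) + (Cd / s ^ d - Cd / t ^ d) • b := by
    unfold coulomb
    rw [← hsdef, ← htdef]
    try module
  rw [key]
  have hnab : |t - s| ≤ ‖a - b‖ := by
    rw [abs_sub_comm]
    exact (abs_norm_sub_norm_le a b)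
  have h1 : ‖(Cd / s ^ d) • (a - b)‖ ≤ Cd / m ^ d * ‖a - b‖ := by
    rw [norm_smul, Real.norm_eq_abs, abs_of_pos (by positivity)]
    gcongr
  have hstM : m ^ d * M ^ d ≤ s ^ d * t ^ d := by
    rw [← mul_pow, ← mul_pow]
    apply pow_le_pow_left₀ (by positivity)
    rcases le_total s t with h | h
    · rw [hMdef, max_eq_right h]
      exact mul_le_mul_of_nonneg_right ha ht.le
    · rw [hMdef, max_eq_left h]
      calc m * s = s * m := by ring
        _ ≤ s * t := by
            have : m ≤ t := hb
            nlinarith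
  have hnum : |t ^ d - s ^ d| * t ≤ d * M ^ d * ‖a - b‖ := by
    have h2 : |t ^ d - s ^ d| ≤ d * M ^ (d - 1) * |t - s| := by
      have := pow_sub_pow_abs_le t s ht.le hs.le d
      rwa [max_comm] at this
    calc |t ^ d - s ^ d| * t ≤ (d * M ^ (d - 1) * ‖a - b‖) * M := by
          calc |t ^ d - s ^ d| * t ≤ (d * M ^ (d - 1) * |t - s|) * t :=
                mul_le_mul_of_nonneg_right h2 ht.le
            _ ≤ (d * M ^ (d - 1) * ‖a - b‖) * M := by
                gcongr
                exact le_max_right _ _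
      _ = d * (M ^ (d - 1) * M) * ‖a - b‖ := by ring
      _ = d * M ^ d * ‖a - b‖ := by
          have hdd : d - 1 + 1 = d := by omega
          rw [← pow_succ, hdd]
  have h2 : ‖(Cd / s ^ d - Cd / t ^ d) • b‖ ≤ Cd * d / m ^ d * ‖a - b‖ := by
    rw [norm_smul, Real.norm_eq_abs, ← htdef]
    have hdiff : Cd / s ^ d - Cd / t ^ d = Cd * (t ^ d - s ^ d) / (s ^ d * t ^ d) := by
      field_simp
    rw [hdiff, abs_div, abs_mul, abs_of_pos hCd, abs_of_pos (by positivity : (0:ℝ) < s ^ d * t ^ d)]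
    calc Cd * |t ^ d - s ^ d| / (s ^ d * t ^ d) * t
        = Cd * (|t ^ d - s ^ d| * t) / (s ^ d * t ^ d) := by ring
      _ ≤ Cd * (d * M ^ d * ‖a - b‖) / (m ^ d * M ^ d) :=
          div_le_div₀ (by positivity)
            (mul_le_mul_of_nonneg_left hnum hCd.le) (by positivity) hstM
      _ = Cd * d / m ^ d * ‖a - b‖ := by
          field_simp
  calc ‖(Cd / s ^ d) • (a - b) + (Cd / s ^ d - Cd / t ^ d) • b‖
      ≤ ‖(Cd / s ^ d) • (a - b)‖ + ‖(Cd / s ^ d - Cd / t ^ d) • b‖ := norm_add_le _ _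
    _ ≤ Cd / m ^ d * ‖a - b‖ + Cd * d / m ^ d * ‖a - b‖ := add_le_add h1 h2
    _ = Cd * (d + 1) / m ^ d * ‖a - b‖ := by ring

theorem kernel_difference_bound (d : ℕ) (hd : 2 ≤ d) (δ Cd : ℝ) (hδ : 0 < δ) (hCd : 0 < Cd) :
    ∃ C > 0, ∀ N : ℕ, 2 ≤ N → ∀ x ξ : EuclideanSpace ℝ (Fin d),
      ‖ξ‖ < 2 * (N : ℝ) ^ (-δ) →
      ‖cutoffKernel d N δ Cd x - cutoffKernel d N δ Cd (x + ξ)‖ ≤ ellN d N δ C x * ‖ξ‖ := by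
  refine ⟨Cd * ((d : ℝ) + 3) * 3 ^ d, by positivity, ?_⟩
  set C : ℝ := Cd * ((d : ℝ) + 3) * 3 ^ d with hCdef
  have h3 : (1 : ℝ) ≤ 3 ^ d := one_le_pow₀ (by norm_num)
  have hdR : (0 : ℝ) ≤ (d : ℝ) := Nat.cast_nonneg d
  intro N hN x ξ hξ
  have hN0 : (0 : ℝ) < N := by
    have : (2 : ℝ) ≤ N := by exact_mod_cast hN
    linarith
  simp only [cutoffKernel, ellN]
  set r := (N : ℝ) ^ (-δ) with hrdef
  have hr : 0 < r := Real.rpow_pos_of_pos hN0 _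
  have hpow : (N : ℝ) ^ ((d : ℝ) * δ) = (r ^ d)⁻¹ := by
    have h1 : r ^ d = (N : ℝ) ^ (-((d : ℝ) * δ)) := by
      rw [hrdef, ← Real.rpow_natCast ((N : ℝ) ^ (-δ)) d, ← Real.rpow_mul hN0.le]
      congr 1
      ring
    rw [h1, ← Real.rpow_neg hN0.le, neg_neg]
  rw [hpow, ← div_eq_mul_inv, ← div_eq_mul_inv]
  set b := x + ξ with hbdef
  have hxb : ‖x - b‖ = ‖ξ‖ := by
    have : x - b = -ξ := by rw [hbdef]; abel
    rw [this, norm_neg]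
  have hbx1 : ‖b‖ ≤ ‖x‖ + ‖ξ‖ := norm_add_le x ξ
  have hbx2 : ‖x‖ ≤ ‖b‖ + ‖ξ‖ := by
    calc ‖x‖ = ‖b + (-ξ)‖ := by congr 1; rw [hbdef]; abel
      _ ≤ ‖b‖ + ‖-ξ‖ := norm_add_le _ _
      _ = ‖b‖ + ‖ξ‖ := by rw [norm_neg]
  by_cases hx : r ≤ ‖x‖ <;> by_cases hb : r ≤ ‖b‖
  · -- Case D : both outside
    simp only [if_pos hx, if_pos hb]
    have hx0 : 0 < ‖x‖ := lt_of_lt_of_le hr hx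
    set m : ℝ := ‖x‖ / 3 with hmdef
    have hm : 0 < m := by positivity
    have hma : m ≤ ‖x‖ := by rw [hmdef]; linarith
    have hmb : m ≤ ‖b‖ := by
      rcases le_total ‖x‖ (3 * r) with h | h
      · calc m ≤ r := by rw [hmdef]; linarith
          _ ≤ ‖b‖ := hb
      · rw [hmdef]; linarith
    calc ‖coulomb d Cd x - coulomb d Cd b‖
        ≤ Cd * (d + 1) / m ^ d * ‖x - b‖ :=
          coulomb_lip d (by omega) Cd m hCd hm x b hma hmb
      _ = Cd * (d + 1) / m ^ d * ‖ξ‖ := by rw [hxb]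
      _ ≤ C / ‖x‖ ^ d * ‖ξ‖ := by
          apply mul_le_mul_of_nonneg_right _ (norm_nonneg ξ)
          rw [hmdef, div_pow, div_div_eq_mul_div]
          apply div_le_div_of_nonneg_right ?_ (by positivity)
          · rw [hCdef]
            have : Cd * ((d : ℝ) + 1) ≤ Cd * ((d : ℝ) + 3) := by nlinarith
            nlinarith [pow_pos (show (0:ℝ) < 3 by norm_num) d]
  · -- Case C : x outside, b inside
    simp only [if_pos hx, if_neg hb]
    push_neg at hb
    have hx0 : 0 < ‖x‖ := lt_of_lt_of_le hr hx
    set a' : EuclideanSpace ℝ (Fin d) := (r / ‖x‖) • x with ha'def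
    have hna' : ‖a'‖ = r := by
      rw [ha'def, norm_smul, Real.norm_eq_abs, abs_of_pos (by positivity)]
      field_simp
    have hca' : coulomb d Cd a' = (Cd / r ^ d) • a' := by rw [coulomb, hna']
    have hxa' : ‖x - a'‖ = ‖x‖ - r := by
      have e : x - a' = (1 - r / ‖x‖) • x := by
        rw [ha'def, sub_smul, one_smul]
      rw [e, norm_smul, Real.norm_eq_abs,
        abs_of_nonneg (by rw [sub_nonneg]; exact div_le_one_of_le₀ hx hx0.le)]
      field_simp
    have hxa'le : ‖x - a'‖ ≤ ‖ξ‖ := by rw [hxa']; linarith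
    have ha'b : ‖a' - b‖ ≤ 2 * ‖ξ‖ := by
      calc ‖a' - b‖ = ‖(a' - x) + (x - b)‖ := by congr 1; abel
        _ ≤ ‖a' - x‖ + ‖x - b‖ := norm_add_le _ _
        _ ≤ ‖ξ‖ + ‖ξ‖ := by
            rw [norm_sub_rev, hxb]
            exact add_le_add_left hxa'le _
        _ = 2 * ‖ξ‖ := by ring
    have hxle : ‖x‖ ≤ 3 * r := by linarith
    calc ‖coulomb d Cd x - (Cd / r ^ d) • b‖
        = ‖(coulomb d Cd x - coulomb d Cd a') + ((Cd / r ^ d) • a' - (Cd / r ^ d) • b)‖ := by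
          rw [hca']; congr 1; abel
      _ ≤ ‖coulomb d Cd x - coulomb d Cd a'‖ + ‖(Cd / r ^ d) • a' - (Cd / r ^ d) • b‖ :=
          norm_add_le _ _
      _ ≤ Cd * (d + 1) / r ^ d * ‖ξ‖ + Cd / r ^ d * (2 * ‖ξ‖) := by
          apply add_le_add
          · exact (coulomb_lip d (by omega) Cd r hCd hr x a' hx hna'.ge).trans
              (mul_le_mul_of_nonneg_left hxa'le (by positivity))
          · rw [← smul_sub, norm_smul, Real.norm_eq_abs, abs_of_pos (by positivity)]
            exact mul_le_mul_of_nonneg_left ha'b (by positivity)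
      _ = Cd * ((d : ℝ) + 3) / r ^ d * ‖ξ‖ := by ring
      _ ≤ C / ‖x‖ ^ d * ‖ξ‖ := by
          apply mul_le_mul_of_nonneg_right _ (norm_nonneg ξ)
          rw [div_le_div_iff₀ (by positivity) (by positivity), hCdef]
          calc Cd * ((d : ℝ) + 3) * ‖x‖ ^ d ≤ Cd * ((d : ℝ) + 3) * (3 * r) ^ d := by
                gcongr
              _ = Cd * ((d : ℝ) + 3) * 3 ^ d * r ^ d := by rw [mul_pow]; ring
  · -- Case B : x inside, b outside
    simp only [if_neg hx, if_pos hb]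
    push_neg at hx
    have hb0 : 0 < ‖b‖ := lt_of_lt_of_le hr hb
    set b' : EuclideanSpace ℝ (Fin d) := (r / ‖b‖) • b with hb'def
    have hnb' : ‖b'‖ = r := by
      rw [hb'def, norm_smul, Real.norm_eq_abs, abs_of_pos (by positivity)]
      field_simp
    have hcb' : coulomb d Cd b' = (Cd / r ^ d) • b' := by rw [coulomb, hnb']
    have hbb' : ‖b' - b‖ = ‖b‖ - r := by
      have e : b' - b = -((1 - r / ‖b‖) • b) := by
        rw [hb'def, sub_smul, one_smul]; abel
      rw [e, norm_neg, norm_smul, Real.norm_eq_abs,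
        abs_of_nonneg (by rw [sub_nonneg]; exact div_le_one_of_le₀ hb hb0.le)]
      field_simp
    have hbb'le : ‖b' - b‖ ≤ ‖ξ‖ := by rw [hbb']; linarith
    have hxb' : ‖x - b'‖ ≤ 2 * ‖ξ‖ := by
      calc ‖x - b'‖ = ‖(x - b) + (b - b')‖ := by congr 1; abel
        _ ≤ ‖x - b‖ + ‖b - b'‖ := norm_add_le _ _
        _ ≤ ‖ξ‖ + ‖ξ‖ := by
            rw [hxb, norm_sub_rev]
            exact add_le_add_right hbb'le _
        _ = 2 * ‖ξ‖ := by ring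
    calc ‖(Cd / r ^ d) • x - coulomb d Cd b‖
        = ‖((Cd / r ^ d) • x - (Cd / r ^ d) • b') + (coulomb d Cd b' - coulomb d Cd b)‖ := by
          rw [hcb']; congr 1; abel
      _ ≤ ‖(Cd / r ^ d) • x - (Cd / r ^ d) • b'‖ + ‖coulomb d Cd b' - coulomb d Cd b‖ :=
          norm_add_le _ _
      _ ≤ Cd / r ^ d * (2 * ‖ξ‖) + Cd * (d + 1) / r ^ d * ‖ξ‖ := by
          apply add_le_add
          · rw [← smul_sub, norm_smul, Real.norm_eq_abs, abs_of_pos (by positivity)]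
            exact mul_le_mul_of_nonneg_left hxb' (by positivity)
          · exact (coulomb_lip d (by omega) Cd r hCd hr b' b hnb'.ge hb).trans
              (mul_le_mul_of_nonneg_left hbb'le (by positivity))
      _ = Cd * ((d : ℝ) + 3) / r ^ d * ‖ξ‖ := by ring
      _ ≤ C / r ^ d * ‖ξ‖ := by
          apply mul_le_mul_of_nonneg_right _ (norm_nonneg ξ)
          apply div_le_div_of_nonneg_right ?_ (by positivity)
          · rw [hCdef]
            calc Cd * ((d : ℝ) + 3) = Cd * ((d : ℝ) + 3) * 1 := by ring
              _ ≤ Cd * ((d : ℝ) + 3) * 3 ^ d := by gcongr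
  · -- Case A : both inside
    simp only [if_neg hx, if_neg hb]
    rw [← smul_sub, norm_smul, Real.norm_eq_abs, abs_of_pos (by positivity), hxb]
    have hC : Cd / r ^ d ≤ C / r ^ d := by
      apply div_le_div_of_nonneg_right ?_ (by positivity)
      · rw [hCdef]
        calc Cd = Cd * 1 * 1 := by ring
          _ ≤ Cd * ((d : ℝ) + 3) * 3 ^ d := by gcongr <;> linarith
    exact mul_le_mul_of_nonneg_right hC (norm_nonneg ξ)
end
end

section
/- (Csiszár–Kullback–Pinsker inequality) For any two probability densities μ, ν on a measure space, ‖μ - ν‖_{L^1}² ≤ 2 ∫ μ log(μ/ν). -/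
open MeasureTheory Real

lemma log_ge_one_sub_inv {x : ℝ} (hx : 0 < x) : 1 - x⁻¹ ≤ Real.log x := by
  have h := Real.log_le_sub_one_of_pos (inv_pos.mpr hx)
  rw [Real.log_inv] at h
  linarith

lemma mul_log_sub_add_nonneg {x : ℝ} (hx : 0 ≤ x) : 0 ≤ x * Real.log x - x + 1 := by
  rcases eq_or_lt_of_le hx with h | h
  · simp [← h]
  · have h1 := log_ge_one_sub_inv h
    have h2 : x * (1 - x⁻¹) ≤ x * Real.log x :=
      mul_le_mul_of_nonneg_left h1 hx
    have h3 : x * (1 - x⁻¹) = x - 1 := by field_simp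
    linarith

noncomputable def kAux (x : ℝ) : ℝ := (x + 1) * Real.log x - 2 * x + 2
noncomputable def gAux (x : ℝ) : ℝ := (2 * x + 4) * (x * Real.log x - x + 1) - 3 * (x - 1) ^ 2

lemma hasDerivAt_kAux {x : ℝ} (hx : 0 < x) :
    HasDerivAt kAux (Real.log x + x⁻¹ - 1) x := by
  have h1 : HasDerivAt (fun x : ℝ => (x + 1) * Real.log x)
      (1 * Real.log x + (x + 1) * x⁻¹) x := by
    exact ((hasDerivAt_id x).add_const 1).mul ((Real.hasDerivAt_log hx.ne'))
  have h2 : HasDerivAt (fun x : ℝ => 2 * x) 2 x := by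
    simpa using (hasDerivAt_id x).const_mul 2
  have := (h1.sub h2).add_const 2
  exact this.congr_deriv (by rw [add_mul, mul_inv_cancel₀ hx.ne']; ring)

lemma hasDerivAt_gAux {x : ℝ} (hx : 0 < x) :
    HasDerivAt gAux (4 * kAux x) x := by
  have h1 : HasDerivAt (fun x : ℝ => 2 * x + 4) 2 x :=
    by simpa using ((hasDerivAt_id x).const_mul 2).add_const 4
  have h2 : HasDerivAt (fun x : ℝ => x * Real.log x - x + 1) (Real.log x + 1 - 1) x :=
    ((Real.hasDerivAt_mul_log hx.ne').sub (hasDerivAt_id x)).add_const 1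
  have h3 : HasDerivAt (fun x : ℝ => 3 * (x - 1) ^ 2) (3 * (2 * (x - 1))) x := by
    have : HasDerivAt (fun x : ℝ => (x - 1) ^ 2) (2 * (x - 1) ^ 1 * 1) x :=
      (((hasDerivAt_id x).sub_const 1)).pow 2
    simpa using this.const_mul 3
  have := (h1.mul h2).sub h3
  exact this.congr_deriv (by unfold kAux; ring)

lemma kAux_one : kAux 1 = 0 := by simp [kAux]
lemma gAux_one : gAux 1 = 0 := by norm_num [gAux]

lemma kAux_nonneg {x : ℝ} (hx : 1 ≤ x) : 0 ≤ kAux x := by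
  have hmono : MonotoneOn kAux (Set.Ici (1/2 : ℝ)) := by
    apply monotoneOn_of_deriv_nonneg (convex_Ici _)
    · apply ContinuousOn.add (ContinuousOn.sub ?_ (by fun_prop)) continuousOn_const
      exact ContinuousOn.mul (by fun_prop)
        (Real.continuousOn_log.mono (by intro x hx; simp at hx ⊢; linarith))
    · intro x hx
      rw [interior_Ici] at hx
      exact (hasDerivAt_kAux (by simp at hx; linarith)).differentiableAt.differentiableWithinAt
    · intro x hx
      rw [interior_Ici] at hx
      have hx0 : (0:ℝ) < x := by simp at hx; linarith
      rw [(hasDerivAt_kAux hx0).deriv]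
      have := log_ge_one_sub_inv hx0
      linarith
  have := hmono (by norm_num : (1:ℝ) ∈ Set.Ici (1/2:ℝ))
    (by simp; linarith : x ∈ Set.Ici (1/2:ℝ)) hx
  rwa [kAux_one] at this

lemma kAux_nonpos {x : ℝ} (hx0 : 0 < x) (hx : x ≤ 1) : kAux x ≤ 0 := by
  have hmono : MonotoneOn kAux (Set.Ioc 0 1) := by
    apply monotoneOn_of_deriv_nonneg (convex_Ioc _ _)
    · apply ContinuousOn.add (ContinuousOn.sub ?_ (by fun_prop)) continuousOn_const
      exact ContinuousOn.mul (by fun_prop)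
        (Real.continuousOn_log.mono (by intro x hx; simp at hx ⊢; exact ne_of_gt hx.1))
    · intro x hx
      rw [interior_Ioc] at hx
      exact (hasDerivAt_kAux hx.1).differentiableAt.differentiableWithinAt
    · intro x hx
      rw [interior_Ioc] at hx
      rw [(hasDerivAt_kAux hx.1).deriv]
      have := log_ge_one_sub_inv hx.1
      linarith
  have := hmono (⟨hx0, hx⟩ : x ∈ Set.Ioc (0:ℝ) 1) (by norm_num : (1:ℝ) ∈ Set.Ioc (0:ℝ) 1) hx
  rwa [kAux_one] at this

lemma gAux_nonneg {x : ℝ} (hx : 0 ≤ x) : 0 ≤ gAux x := by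
  have hcont : Continuous gAux := by
    have h1 : Continuous fun x : ℝ => x * Real.log x := Real.continuous_mul_log
    unfold gAux
    continuity
  rcases le_or_gt x 1 with hle | hgt
  · have hanti : AntitoneOn gAux (Set.Icc 0 1) := by
      apply antitoneOn_of_deriv_nonpos (convex_Icc _ _) hcont.continuousOn
      · intro y hy
        rw [interior_Icc] at hy
        exact (hasDerivAt_gAux hy.1).differentiableAt.differentiableWithinAt
      · intro y hy
        rw [interior_Icc] at hy
        rw [(hasDerivAt_gAux hy.1).deriv]
        have := kAux_nonpos hy.1 hy.2.le
        linarith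
    have := hanti (⟨hx, hle⟩ : x ∈ Set.Icc (0:ℝ) 1)
      (by norm_num : (1:ℝ) ∈ Set.Icc (0:ℝ) 1) hle
    rwa [gAux_one] at this
  · have hmono : MonotoneOn gAux (Set.Ici 1) := by
      apply monotoneOn_of_deriv_nonneg (convex_Ici _) hcont.continuousOn
      · intro y hy
        rw [interior_Ici] at hy
        exact (hasDerivAt_gAux (by simp at hy; linarith : (0:ℝ) < y)).differentiableAt.differentiableWithinAt
      · intro y hy
        rw [interior_Ici] at hy
        have hy1 : 1 < y := hy
        rw [(hasDerivAt_gAux (by linarith : (0:ℝ) < y)).deriv]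
        have := kAux_nonneg hy1.le
        linarith
    have := hmono (by norm_num : (1:ℝ) ∈ Set.Ici (1:ℝ)) hgt.le hgt.le
    rwa [gAux_one] at this

lemma key_scalar {x : ℝ} (hx : 0 ≤ x) :
    3 * (x - 1) ^ 2 ≤ (2 * x + 4) * (x * Real.log x - x + 1) := by
  have := gAux_nonneg hx
  unfold gAux at this
  linarith

lemma key_pq {P Q : ℝ} (hP : 0 ≤ P) (hQ : 0 < Q) :
    3 * (P - Q) ^ 2 ≤ (2 * P + 4 * Q) * (P * Real.log (P / Q) - P + Q) ∧
      0 ≤ P * Real.log (P / Q) - P + Q := by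
  set x := P / Q with hxdef
  have hx : 0 ≤ x := div_nonneg hP hQ.le
  have hk := key_scalar hx
  have hh := mul_log_sub_add_nonneg hx
  have hPx : P = x * Q := by rw [hxdef, div_mul_cancel₀ P hQ.ne']
  constructor
  · calc 3 * (P - Q) ^ 2 = (Q * Q) * (3 * (x - 1) ^ 2) := by rw [hPx]; ring
      _ ≤ (Q * Q) * ((2 * x + 4) * (x * Real.log x - x + 1)) :=
          mul_le_mul_of_nonneg_left hk (mul_pos hQ hQ).le
      _ = (2 * P + 4 * Q) * (P * Real.log x - P + Q) := by rw [hPx]; ring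
  · calc (0:ℝ) ≤ Q * (x * Real.log x - x + 1) := mul_nonneg hQ.le hh
      _ = P * Real.log x - P + Q := by rw [hPx]; ring

theorem csiszar_kullback_pinsker {α : Type*} [MeasurableSpace α] (μ : Measure α)
    (p q : α → ℝ) (hp0 : ∀ a, 0 ≤ p a) (hq0 : ∀ a, 0 ≤ q a)
    (hpint : Integrable p μ) (hqint : Integrable q μ)
    (hp1 : ∫ a, p a ∂μ = 1) (hq1 : ∫ a, q a ∂μ = 1)
    (hac : ∀ᵐ a ∂μ, q a = 0 → p a = 0)
    (hent : Integrable (fun a => p a * Real.log (p a / q a)) μ) :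
    (∫ a, |p a - q a| ∂μ) ^ 2 ≤ 2 * ∫ a, p a * Real.log (p a / q a) ∂μ := by
  set r : α → ℝ := fun a => p a * Real.log (p a / q a) - p a + q a with hrdef
  have hrint : Integrable r μ := (hent.sub hpint).add hqint
  have hkey : ∀ᵐ a ∂μ, 3 * (p a - q a) ^ 2 ≤ (2 * p a + 4 * q a) * r a ∧ 0 ≤ r a := by
    filter_upwards [hac] with a ha
    rcases (hq0 a).eq_or_lt with hq | hq
    · have hp : p a = 0 := ha hq.symm
      simp [hrdef, hp, ← hq]
    · exact key_pq (hp0 a) hq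
  set f : α → ℝ := fun a => Real.sqrt ((2 * p a + 4 * q a) / 3) with hfdef
  set g : α → ℝ := fun a => Real.sqrt (r a) with hgdef
  have hpm := hpint.aestronglyMeasurable
  have hqm := hqint.aestronglyMeasurable
  have hsq_int : Integrable (fun a => (2 * p a + 4 * q a) / 3) μ :=
    ((hpint.const_mul 2).add (hqint.const_mul 4)).div_const 3
  have hfm : AEStronglyMeasurable f μ :=
    Real.continuous_sqrt.comp_aestronglyMeasurable hsq_int.aestronglyMeasurable
  have hgm : AEStronglyMeasurable g μ :=
    Real.continuous_sqrt.comp_aestronglyMeasurable hrint.aestronglyMeasurable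
  have hf_sq : ∀ a, f a ^ 2 = (2 * p a + 4 * q a) / 3 := by
    intro a
    exact Real.sq_sqrt (div_nonneg (by linarith [hp0 a, hq0 a]) (by norm_num))
  have hg_sq : ∀ᵐ a ∂μ, g a ^ 2 = r a := by
    filter_upwards [hkey] with a ha
    exact Real.sq_sqrt ha.2
  have hf2 : MemLp f 2 μ := (memLp_two_iff_integrable_sq hfm).mpr
    (hsq_int.congr (Filter.Eventually.of_forall fun a => (hf_sq a).symm))
  have hg2 : MemLp g 2 μ := (memLp_two_iff_integrable_sq hgm).mpr
    (hrint.congr (by filter_upwards [hg_sq] with a ha; rw [ha]))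
  have hfg_int : Integrable (fun a => f a * g a) μ := by
    refine Integrable.mono' (((hf2.integrable_sq.add hg2.integrable_sq).div_const 2))
      (hfm.mul hgm) ?_
    filter_upwards with a
    have h1 : 0 ≤ f a := Real.sqrt_nonneg _
    have h2 : 0 ≤ g a := Real.sqrt_nonneg _
    rw [Real.norm_of_nonneg (mul_nonneg h1 h2)]
    simp only [Pi.add_apply]
    nlinarith [sq_nonneg (f a - g a)]
  have hle_ae : ∀ᵐ a ∂μ, |p a - q a| ≤ f a * g a := by
    filter_upwards [hkey] with a ha
    have h1 : (p a - q a) ^ 2 ≤ (f a * g a) ^ 2 := by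
      rw [mul_pow, hf_sq a, Real.sq_sqrt ha.2, div_mul_eq_mul_div,
        le_div_iff₀ (by norm_num : (0:ℝ) < 3)]
      linarith [ha.1]
    calc |p a - q a| = Real.sqrt ((p a - q a) ^ 2) := (Real.sqrt_sq_eq_abs _).symm
      _ ≤ Real.sqrt ((f a * g a) ^ 2) := Real.sqrt_le_sqrt h1
      _ = f a * g a := Real.sqrt_sq (mul_nonneg (Real.sqrt_nonneg _) (Real.sqrt_nonneg _))
  have h2e : ENNReal.ofReal (2:ℝ) = 2 := by norm_num
  have hconj : Real.HolderConjugate 2 2 := Real.HolderConjugate.two_two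
  have hholder := integral_mul_le_Lp_mul_Lq_of_nonneg hconj
    (Filter.Eventually.of_forall fun a => Real.sqrt_nonneg _ : 0 ≤ᵐ[μ] f)
    (Filter.Eventually.of_forall fun a => Real.sqrt_nonneg _ : 0 ≤ᵐ[μ] g)
    (h2e ▸ hf2) (h2e ▸ hg2)
  -- compute the two integrals of squares
  have hrpow : ∀ (y : ℝ), y ^ (2:ℝ) = y ^ 2 := fun y => by
    rw [show (2:ℝ) = ((2:ℕ):ℝ) by norm_num, Real.rpow_natCast]
  have hA : ∫ a, f a ^ (2:ℝ) ∂μ = 2 := by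
    have : ∫ a, f a ^ (2:ℝ) ∂μ = ∫ a, (2 * p a + 4 * q a) / 3 ∂μ := by
      refine integral_congr_ae (Filter.Eventually.of_forall fun a => ?_)
      show f a ^ (2:ℝ) = _
      rw [hrpow, hf_sq a]
    rw [this, integral_div, integral_add (hpint.const_mul 2) (hqint.const_mul 4),
      integral_const_mul, integral_const_mul, hp1, hq1]
    norm_num
  have hKL : ∫ a, r a ∂μ = ∫ a, p a * Real.log (p a / q a) ∂μ := by
    have e1 : Integrable (fun a => p a * Real.log (p a / q a) - p a) μ := hent.sub hpint
    rw [hrdef]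
    rw [integral_add e1 hqint, integral_sub hent hpint, hp1, hq1]
    ring
  have hB : ∫ a, g a ^ (2:ℝ) ∂μ = ∫ a, p a * Real.log (p a / q a) ∂μ := by
    rw [← hKL]
    refine integral_congr_ae ?_
    filter_upwards [hg_sq] with a ha
    show g a ^ (2:ℝ) = _
    rw [hrpow, ha]
  have hKL0 : 0 ≤ ∫ a, p a * Real.log (p a / q a) ∂μ := by
    rw [← hKL]
    exact integral_nonneg_of_ae (by filter_upwards [hkey] with a ha; exact ha.2)
  have hmain : ∫ a, |p a - q a| ∂μ ≤
      (2:ℝ) ^ (1/2:ℝ) * (∫ a, p a * Real.log (p a / q a) ∂μ) ^ (1/2:ℝ) := by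
    calc ∫ a, |p a - q a| ∂μ ≤ ∫ a, f a * g a ∂μ :=
          integral_mono_ae ((hpint.sub hqint).abs) hfg_int hle_ae
      _ ≤ (∫ a, f a ^ (2:ℝ) ∂μ) ^ (1/2:ℝ) * (∫ a, g a ^ (2:ℝ) ∂μ) ^ (1/2:ℝ) := hholder
      _ = (2:ℝ) ^ (1/2:ℝ) * (∫ a, p a * Real.log (p a / q a) ∂μ) ^ (1/2:ℝ) := by
          rw [hA, hB]
  have habs0 : 0 ≤ ∫ a, |p a - q a| ∂μ :=
    integral_nonneg fun a => abs_nonneg _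
  have hsq : ((2:ℝ) ^ (1/2:ℝ) * (∫ a, p a * Real.log (p a / q a) ∂μ) ^ (1/2:ℝ)) ^ 2 =
      2 * ∫ a, p a * Real.log (p a / q a) ∂μ := by
    rw [mul_pow, ← Real.rpow_natCast ((2:ℝ) ^ (1/2:ℝ)) 2,
      ← Real.rpow_natCast ((∫ a, p a * Real.log (p a / q a) ∂μ) ^ (1/2:ℝ)) 2,
      ← Real.rpow_mul (by norm_num : (0:ℝ) ≤ 2), ← Real.rpow_mul hKL0]
    norm_num
  calc (∫ a, |p a - q a| ∂μ) ^ 2 ≤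
      ((2:ℝ) ^ (1/2:ℝ) * (∫ a, p a * Real.log (p a / q a) ∂μ) ^ (1/2:ℝ)) ^ 2 :=
        pow_le_pow_left₀ habs0 hmain 2
    _ = 2 * ∫ a, p a * Real.log (p a / q a) ∂μ := hsq
end
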